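/- The forced limit operator flim : [0,1]^ℕ → [0,1], defined by flim(x) = lim x_n if (x_n) is a 'forced' Cauchy sequence (e.g. flim(x) = lim_n y_n where y is the modification forcing |y_{n+1} − y_n| ≤ 2^{−n}), is 1-Lipschitz when [0,1]^ℕ carries the supremum metric; consequently, if (g_n) is a family of continuous c-Lipschitz functions from a topometric space X to [0,1], then flim g_n is continuous and c-Lipschitz. -/

import Mathlib

open scoped ENNReal NNReal
open Set

structure TopometricOn (X : Type*) [TopologicalSpace X] where
  d : X → X → ℝ≥0∞
  d_self : ∀ x, d x x = 0
  eq_of_d_eq_zero : ∀ x y, d x y = 0 → x = y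
  d_symm : ∀ x y, d x y = d y x
  d_triangle : ∀ x y z, d x z ≤ d x y + d y z
  lsc : LowerSemicontinuous fun p : X × X => d p.1 p.2
  refines : ∀ U : Set X, IsOpen U → ∀ x ∈ U, ∃ ε > (0 : ℝ≥0∞), ∀ y, d x y < ε → y ∈ U

namespace TopometricOn

variable {X : Type*} [TopologicalSpace X]

noncomputable def setD (T : TopometricOn X) (F G : Set X) : ℝ≥0∞ :=
  ⨅ x ∈ F, ⨅ y ∈ G, T.d x y

noncomputable def ptD (T : TopometricOn X) (x : X) (F : Set X) : ℝ≥0∞ :=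
  ⨅ y ∈ F, T.d x y

def IsNormal (T : TopometricOn X) : Prop :=
  (∀ F G : Set X, IsClosed F → IsClosed G → 0 < T.setD F G →
      ∃ U V : Set X, IsOpen U ∧ IsOpen V ∧ F ⊆ U ∧ G ⊆ V ∧ Disjoint U V) ∧
  (∀ F : Set X, IsClosed F → ∀ r : ℝ≥0∞, 0 < r → IsClosed {x | T.ptD x F ≤ r})

end TopometricOn


/-- The "forcing" modification of a sequence: `y 0 = x 0` and `y (n+1)` is `x (n+1)`
clamped to the interval `[y n - 2⁻ⁿ, y n + 2⁻ⁿ]`, so `|y (n+1) - y n| ≤ 2⁻ⁿ` always,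
and `y = x` whenever `x` already satisfies `|x (n+1) - x n| ≤ 2⁻ⁿ`. -/
noncomputable def forced (x : ℕ → ℝ) : ℕ → ℝ
  | 0 => x 0
  | n + 1 => max (forced x n - (1 / 2) ^ n) (min (forced x n + (1 / 2) ^ n) (x (n + 1)))

/-- The forced limit operator. -/
noncomputable def flim (x : ℕ → ℝ) : ℝ := Filter.limUnder Filter.atTop (forced x)

section FlimAux
open Filter

lemma forced_step (x : ℕ → ℝ) (n : ℕ) :
    dist (forced x n) (forced x (n + 1)) ≤ 1 * (1 / 2 : ℝ) ^ n := by
  have hp : (0:ℝ) < (1/2:ℝ)^n := by positivity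
  rw [one_mul, Real.dist_eq, abs_sub_le_iff]
  constructor
  · have : forced x (n+1) ≥ forced x n - (1/2)^n := le_max_left _ _
    linarith
  · have : forced x (n+1) ≤ forced x n + (1/2)^n := by
      apply max_le (by linarith) (min_le_left _ _)
    linarith

lemma forced_tendsto (x : ℕ → ℝ) : Tendsto (forced x) atTop (nhds (flim x)) := by
  have hc : CauchySeq (forced x) :=
    cauchySeq_of_le_geometric (1/2) 1 (by norm_num) (forced_step x)
  obtain ⟨a, ha⟩ := cauchySeq_tendsto_of_complete hc
  rwa [flim, ha.limUnder_eq]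

lemma forced_dist_flim (x : ℕ → ℝ) (n : ℕ) :
    dist (forced x n) (flim x) ≤ 2 * (1/2:ℝ) ^ n := by
  have := dist_le_of_le_geometric_of_tendsto (1/2) 1 (by norm_num) (forced_step x)
    (forced_tendsto x) n
  calc dist (forced x n) (flim x) ≤ 1 * (1/2:ℝ)^n / (1 - 1/2) := this
    _ = 2 * (1/2:ℝ)^n := by ring

lemma forced_eq (x : ℕ → ℝ) (h : ∀ n, |x (n + 1) - x n| ≤ (1 / 2) ^ n) :
    ∀ n, forced x n = x n := by
  intro n
  induction n with
  | zero => rfl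
  | succ n ih =>
      have h1 := abs_le.mp (h n)
      show max (forced x n - (1 / 2) ^ n) (min (forced x n + (1 / 2) ^ n) (x (n + 1))) = x (n+1)
      rw [ih, min_eq_right (by linarith [h1.2]), max_eq_right (by linarith [h1.1])]

lemma forced_lip (x y : ℕ → ℝ) (r : ℝ) (h : ∀ n, |x n - y n| ≤ r) :
    ∀ n, |forced x n - forced y n| ≤ r := by
  intro n
  induction n with
  | zero => exact h 0
  | succ n ih =>
      show |max (forced x n - (1/2)^n) (min (forced x n + (1/2)^n) (x (n+1))) -
        max (forced y n - (1/2)^n) (min (forced y n + (1/2)^n) (y (n+1)))| ≤ r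
      calc _ ≤ max |(forced x n - (1/2)^n) - (forced y n - (1/2)^n)|
                |min (forced x n + (1/2)^n) (x (n+1)) - min (forced y n + (1/2)^n) (y (n+1))| :=
              abs_max_sub_max_le_max _ _ _ _
        _ ≤ r := by
            apply max_le (by simpa using ih)
            calc _ ≤ max |(forced x n + (1/2)^n) - (forced y n + (1/2)^n)| |x (n+1) - y (n+1)| :=
                  abs_min_sub_min_le_max _ _ _ _
              _ ≤ r := max_le (by simpa using ih) (h (n+1))

lemma flim_lip (x y : ℕ → ℝ) (r : ℝ) (h : ∀ n, |x n - y n| ≤ r) :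
    |flim x - flim y| ≤ r := by
  have ht : Tendsto (fun n => |forced x n - forced y n|) atTop (nhds |flim x - flim y|) :=
    (((forced_tendsto x).sub (forced_tendsto y)).abs)
  exact le_of_tendsto ht (Filter.Eventually.of_forall (forced_lip x y r h))

lemma forced_mem (x : ℕ → ℝ) (h : ∀ n, x n ∈ Set.Icc (0:ℝ) 1) :
    ∀ n, forced x n ∈ Set.Icc (0:ℝ) 1 := by
  intro n
  induction n with
  | zero => exact h 0
  | succ n ih =>
      have hp : (0:ℝ) < (1/2:ℝ)^n := by positivity
      have h1 := h (n+1)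
      constructor
      · exact le_max_of_le_right (le_min (by linarith [ih.1]) h1.1)
      · exact max_le (by linarith [ih.2]) ((min_le_right _ _).trans h1.2)

lemma flim_mem (x : ℕ → ℝ) (h : ∀ n, x n ∈ Set.Icc (0:ℝ) 1) :
    flim x ∈ Set.Icc (0:ℝ) 1 := by
  have := forced_tendsto x
  constructor
  · exact ge_of_tendsto this (Filter.Eventually.of_forall fun n => (forced_mem x h n).1)
  · exact le_of_tendsto this (Filter.Eventually.of_forall fun n => (forced_mem x h n).2)

lemma forced_cont {X : Type*} [TopologicalSpace X] (g : ℕ → X → ℝ) (hg : ∀ n, Continuous (g n)) :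
    ∀ k, Continuous (fun p => forced (fun n => g n p) k) := by
  intro k
  induction k with
  | zero => exact hg 0
  | succ k ih =>
      simp only [forced]
      exact (ih.sub continuous_const).max ((ih.add continuous_const).min (hg (k+1)))

lemma flim_cont {X : Type*} [TopologicalSpace X] (g : ℕ → X → ℝ) (hg : ∀ n, Continuous (g n)) :
    Continuous (fun p => flim fun n => g n p) := by
  have hu : TendstoUniformly (fun (k:ℕ) p => forced (fun n => g n p) k)
      (fun p => flim fun n => g n p) Filter.atTop := by
    rw [Metric.tendstoUniformly_iff]
    intro ε hε
    obtain ⟨N, hN⟩ := exists_pow_lt_of_lt_one (show (0:ℝ) < ε/2 by linarith) (show (1/2:ℝ) < 1 by norm_num)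
    filter_upwards [Filter.eventually_ge_atTop N] with k hk p
    have h1 : ((1:ℝ)/2)^k ≤ (1/2)^N :=
      pow_le_pow_of_le_one (by norm_num) (by norm_num) hk
    have h2 := forced_dist_flim (fun n => g n p) k
    rw [dist_comm] at h2
    calc dist (flim fun n => g n p) (forced (fun n => g n p) k) ≤ 2*(1/2:ℝ)^k := h2
      _ ≤ 2*(1/2:ℝ)^N := by linarith
      _ < ε := by linarith
  exact hu.continuous (Filter.Frequently.of_forall (forced_cont g hg))

end FlimAux

/-- `flim` computes the limit of forced Cauchy sequences, is `1`-Lipschitz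
for the supremum metric on `[0,1]^ℕ`, and consequently a forced limit of continuous
`c`-Lipschitz functions on a topometric space is continuous and `c`-Lipschitz. -/
theorem flim_lipschitz_and_forced_limit_of_continuous_lipschitz
    {X : Type*} [TopologicalSpace X] (T : TopometricOn X) (c : ℝ≥0) :
    (∀ x : ℕ → ℝ, (∀ n, |x (n + 1) - x n| ≤ (1 / 2) ^ n) →
      Filter.Tendsto x Filter.atTop (nhds (flim x))) ∧
    (∀ x y : ℕ → ℝ, (∀ n, x n ∈ Set.Icc (0 : ℝ) 1) → (∀ n, y n ∈ Set.Icc (0 : ℝ) 1) →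
      ∀ r : ℝ, 0 ≤ r → (∀ n, |x n - y n| ≤ r) → |flim x - flim y| ≤ r) ∧
    (∀ g : ℕ → X → ℝ, (∀ n, Continuous (g n)) →
      (∀ n, ∀ x y, edist (g n x) (g n y) ≤ (c : ℝ≥0∞) * T.d x y) →
      (∀ n x, g n x ∈ Set.Icc (0 : ℝ) 1) →
      Continuous (fun p => flim fun n => g n p) ∧
        (∀ x y, edist (flim fun n => g n x) (flim fun n => g n y) ≤ (c : ℝ≥0∞) * T.d x y) ∧
        ∀ p, (flim fun n => g n p) ∈ Set.Icc (0 : ℝ) 1) := by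
  
  refine ⟨?_, ?_, ?_⟩
  · intro x hx
    have he : forced x = x := funext (forced_eq x hx)
    have h := forced_tendsto x
    rwa [he] at h
  · intro x y _ _ r _ h
    exact flim_lip x y r h
  · intro g hgc hgl hgm
    refine ⟨flim_cont g hgc, ?_, fun p => flim_mem _ (fun n => hgm n p)⟩
    intro x y
    by_cases hd : (c : ℝ≥0∞) * T.d x y = ⊤
    · rw [hd]; exact le_top
    · have hb : ∀ n, |g n x - g n y| ≤ ((c : ℝ≥0∞) * T.d x y).toReal := by
        intro n
        have h := hgl n x y
        rw [edist_dist, Real.dist_eq] at h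
        exact (ENNReal.ofReal_le_iff_le_toReal hd).mp h
      have h2 := flim_lip _ _ _ hb
      rw [edist_dist, Real.dist_eq]
      calc ENNReal.ofReal |flim (fun n => g n x) - flim (fun n => g n y)|
          ≤ ENNReal.ofReal (((c : ℝ≥0∞) * T.d x y).toReal) := ENNReal.ofReal_le_ofReal h2
        _ = _ := ENNReal.ofReal_toReal hd
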